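/- Suppose a Hausdorff topological group G acts on a set X, K is a symmetric neighborhood of the identity in G, Y ⊆ X is K-discrete (distinct points x, y ∈ Y satisfy y ∉ K·x), and C ⊆ G is compact. Then for every x ∈ X, the set Y ∩ (C·x) is finite. -/

import Mathlib

/-- In a Hausdorff topological group `G` acting on a set `X`, if `K` is a symmetric
neighborhood of the identity, `Y ⊆ X` is `K`-discrete, and `C ⊆ G` is compact, then
`Y ∩ (C·x)` is finite for every `x ∈ X`. -/
theorem K_discrete_inter_compact_orbit_finite
    {G X : Type*} [Group G] [TopologicalSpace G] [IsTopologicalGroup G] [T2Space G]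
    [MulAction G X]
    (K : Set G) (hKnhds : K ∈ nhds (1 : G)) (hKsymm : K⁻¹ = K)
    (Y : Set X) (hYdisc : ∀ x ∈ Y, ∀ y ∈ Y, x ≠ y → ∀ k ∈ K, k • x ≠ y)
    (C : Set G) (hC : IsCompact C) (x : X) :
    (Y ∩ ((· • x) '' C)).Finite := by
  classical
  by_contra hinf
  replace hinf : (Y ∩ ((· • x) '' C)).Infinite := hinf
  set S := Y ∩ ((· • x) '' C) with hS
  -- choose a witness in C for each point of S
  have hwit : ∀ y ∈ S, ∃ g, g ∈ C ∧ g • x = y := by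
    rintro y ⟨-, g, hg, rfl⟩; exact ⟨g, hg, rfl⟩
  choose c hcC hcx using hwit
  -- the set of witnesses
  set T : Set G := {g | ∃ y, ∃ hy : y ∈ S, g = c y hy} with hT
  have hTC : T ⊆ C := by rintro g ⟨y, hy, rfl⟩; exact hcC y hy
  have hTinf : T.Infinite := by
    have : S ⊆ (· • x) '' T := by
      intro y hy
      exact ⟨c y hy, ⟨y, hy, rfl⟩, hcx y hy⟩
    intro hfin
    exact hinf ((hfin.image _).subset this)
  obtain ⟨g₀, hg₀C, hacc⟩ := hTinf.exists_accPt_of_subset_isCompact hC hTC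
  -- symmetric neighborhood V with V * V ⊆ K
  obtain ⟨W, hW, hWmul⟩ := exists_nhds_one_split hKnhds
  set V := W ∩ W⁻¹ with hV
  have hVnhds : V ∈ nhds (1 : G) := Filter.inter_mem hW (inv_mem_nhds_one _ hW)
  have hVsymm : ∀ v ∈ V, v⁻¹ ∈ V := by
    rintro v ⟨h1, h2⟩; exact ⟨h2, by simpa using h1⟩
  have hVK : ∀ v ∈ V, ∀ w ∈ V, v * w ∈ K := fun v hv w hw => hWmul v hv.1 w hw.1
  -- V * g₀ is a neighborhood of g₀
  have hnbhd : (· * g₀) '' V ∈ nhds g₀ := by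
    have h := Filter.image_mem_map (m := (· * g₀)) hVnhds
    rwa [map_mul_right_nhds_one] at h
  -- accumulation: every nbhd of g₀ meets T \ {g₀}
  have key : ∀ U ∈ nhds g₀, ∃ g ∈ T, g ≠ g₀ ∧ g ∈ U := by
    intro U hU
    obtain ⟨g, ⟨hgU, hgT⟩, hgne⟩ := (accPt_iff_nhds (x := g₀) (C := T)).mp hacc U hU
    exact ⟨g, hgT, hgne, hgU⟩
  obtain ⟨g₁, hg₁T, hg₁ne, hg₁U⟩ := key _ hnbhd
  have hopen : (· * g₀) '' V ∩ {g₁}ᶜ ∈ nhds g₀ := by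
    refine Filter.inter_mem hnbhd ?_
    exact IsOpen.mem_nhds isOpen_compl_singleton (by simpa using hg₁ne.symm)
  obtain ⟨g₂, hg₂T, hg₂ne, hg₂U, hg₂ne1⟩ :
      ∃ g₂, g₂ ∈ T ∧ g₂ ≠ g₀ ∧ g₂ ∈ (· * g₀) '' V ∧ g₂ ≠ g₁ := by
    obtain ⟨g₂, h1, h2, h3⟩ := key _ hopen
    exact ⟨g₂, h1, h2, h3.1, h3.2⟩
  -- write g₁ = v₁ * g₀, g₂ = v₂ * g₀
  obtain ⟨v₁, hv₁, rfl⟩ := hg₁U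
  obtain ⟨v₂, hv₂, rfl⟩ := hg₂U
  -- the two points of Y
  obtain ⟨y₁, hy₁, hc₁⟩ := hg₁T
  obtain ⟨y₂, hy₂, hc₂⟩ := hg₂T
  beta_reduce at hc₁ hc₂ hg₂ne1
  have hy₁x : (v₁ * g₀) • x = y₁ := by rw [hc₁]; exact hcx y₁ hy₁
  have hy₂x : (v₂ * g₀) • x = y₂ := by rw [hc₂]; exact hcx y₂ hy₂
  have hyne : y₁ ≠ y₂ := by
    rintro rfl
    exact hg₂ne1 (by rw [hc₂, ← hc₁])
  have hk : v₂ * v₁⁻¹ ∈ K := hVK _ hv₂ _ (hVsymm _ hv₁)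
  refine hYdisc y₁ hy₁.1 y₂ hy₂.1 hyne _ hk ?_
  rw [← hy₁x, ← hy₂x, smul_smul]
  congr 1
  group
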